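/- Let A be a commutative ring, N a finitely presented A-module, and (I_j)_{j ∈ ι} a family of ideals of A. Then the natural map N ⊗_A (∏_j A/I_j) → ∏_j (N ⊗_A A/I_j) is an isomorphism. -/

import Mathlib

open TensorProduct

section Aux

variable {A : Type*} [CommRing A] {ι : Type*} (M : ι → Type*)
  [∀ j, AddCommGroup (M j)] [∀ j, Module A (M j)]

private lemma piRightHom_naturality {N N' : Type*} [AddCommGroup N] [Module A N]
    [AddCommGroup N'] [Module A N'] (f : N →ₗ[A] N') :
    (TensorProduct.piRightHom A A N' M).comp (f.rTensor (∀ j, M j))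
      = (LinearMap.pi fun j => (f.rTensor (M j)).comp (LinearMap.proj j)).comp
        (TensorProduct.piRightHom A A N M) :=
  TensorProduct.ext' fun n m => rfl

private lemma free_bij (n : ℕ) :
    Function.Bijective (TensorProduct.piRightHom A A (Fin n → A) M) := by
  let swap : (Fin n → ∀ j, M j) ≃ₗ[A] ∀ j, Fin n → M j :=
    { toFun := fun f j k => f k j, invFun := fun g k j => g j k,
      map_add' := fun _ _ => rfl, map_smul' := fun _ _ => rfl,
      left_inv := fun _ => rfl, right_inv := fun _ => rfl }
  let e : (Fin n → A) ⊗[A] (∀ j, M j) ≃ₗ[A] ∀ j, (Fin n → A) ⊗[A] M j :=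
    TensorProduct.comm A _ _ ≪≫ₗ TensorProduct.piScalarRight A A (∀ j, M j) (Fin n)
      ≪≫ₗ swap ≪≫ₗ LinearEquiv.piCongrRight
        (fun j => (TensorProduct.comm A (Fin n → A) (M j) ≪≫ₗ
          TensorProduct.piScalarRight A A (M j) (Fin n)).symm)
  have h : (TensorProduct.piRightHom A A (Fin n → A) M) = e.toLinearMap := by
    refine TensorProduct.ext' fun f m => ?_
    funext j
    show f ⊗ₜ[A] m j = (TensorProduct.comm A (Fin n → A) (M j) ≪≫ₗ
        TensorProduct.piScalarRight A A (M j) (Fin n)).symm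
        (swap ((TensorProduct.piScalarRight A A (∀ j, M j) (Fin n))
          ((TensorProduct.comm A _ _) (f ⊗ₜ[A] m))) j)
    rw [eq_comm, LinearEquiv.symm_apply_eq]
    simp [swap]
  rw [show ⇑(TensorProduct.piRightHom A A (Fin n → A) M) = ⇑e by rw [h]; rfl]
  exact e.bijective

private lemma fin_surj (N : Type*) [AddCommGroup N] [Module A N] [Module.Finite A N] :
    Function.Surjective (TensorProduct.piRightHom A A N M) := by
  obtain ⟨n, p, hp⟩ := Module.Finite.exists_fin' A N
  intro x
  have hcomp : ∀ j, Function.Surjective (p.rTensor (M j)) :=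
    fun j => LinearMap.rTensor_surjective (M j) hp
  choose y hy using fun j => hcomp j (x j)
  obtain ⟨z, hz⟩ := (free_bij M n).surjective y
  refine ⟨p.rTensor (∀ j, M j) z, ?_⟩
  have hnatz := LinearMap.congr_fun (piRightHom_naturality M p) z
  simp only [LinearMap.coe_comp, Function.comp_apply] at hnatz
  rw [hnatz, hz]
  funext j
  simpa using hy j

end Aux

/-- For a finitely presented module `N` over a commutative ring `A` and a family of ideals
`I j`, the natural map `N ⊗[A] (∏ j, A/I j) → ∏ j, (N ⊗[A] A/I j)` is an isomorphism. -/
theorem stmt4 {A : Type*} [CommRing A] {ι : Type*} (I : ι → Ideal A)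
    (N : Type*) [AddCommGroup N] [Module A N] [Module.FinitePresentation A N] :
    Function.Bijective
      (TensorProduct.piRightHom A A N (fun j => A ⧸ I j)) := by
  set M : ι → Type _ := fun j => A ⧸ I j with hM
  constructor
  · -- injectivity
    rw [injective_iff_map_eq_zero]
    intro x hx
    obtain ⟨n, p, hp⟩ := Module.Finite.exists_fin' A N
    set K := LinearMap.ker p with hK
    have hfgK : K.FG := Module.FinitePresentation.fg_ker p hp
    have : Module.Finite A K := Module.Finite.iff_fg.mpr hfgK
    have hexact : Function.Exact (K.subtype) p := p.exact_subtype_ker_map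
    -- lift x along the surjection p ⊗ 1
    obtain ⟨y, rfl⟩ := LinearMap.rTensor_surjective (∀ j, M j) hp x
    have hnat := LinearMap.congr_fun (piRightHom_naturality M p) y
    simp only [LinearMap.coe_comp, Function.comp_apply] at hnat
    rw [hx] at hnat
    -- each component of piRightHom y is killed by p ⊗ 1
    have hker : ∀ j, (p.rTensor (M j)) ((TensorProduct.piRightHom A A (Fin n → A) M) y j)
        = 0 := by
      intro j
      have := congrFun hnat.symm j
      simpa using this
    have hexact' : ∀ j, Function.Exact (K.subtype.rTensor (M j)) (p.rTensor (M j)) :=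
      fun j => rTensor_exact (M j) hexact hp
    have hmem : ∀ j, ∃ z : K ⊗[A] M j,
        K.subtype.rTensor (M j) z = (TensorProduct.piRightHom A A (Fin n → A) M) y j :=
      fun j => (hexact' j _).mp (hker j)
    choose z hz using hmem
    obtain ⟨w, hw⟩ := fin_surj M K z
    have hnat2 := LinearMap.congr_fun (piRightHom_naturality M K.subtype) w
    simp only [LinearMap.coe_comp, Function.comp_apply] at hnat2
    have hy : K.subtype.rTensor (∀ j, M j) w = y := by
      apply (free_bij M n).injective
      rw [hnat2]
      funext j
      simp only [LinearMap.pi_apply, LinearMap.coe_comp, Function.comp_apply,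
        LinearMap.proj_apply]
      rw [hw, hz j]
    rw [← hy, ← LinearMap.comp_apply, ← LinearMap.rTensor_comp]
    have : p ∘ₗ K.subtype = 0 := by
      ext ⟨k, hk⟩
      simpa [hK] using hk
    rw [this]
    simp
  · exact fin_surj M N
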